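/- Let C ≥ 1, let Z_1,…,Z_C be finite nonempty sets, Z = Z_1 × ⋯ × Z_C, let T ⊆ Z be a finite training set, a : T → ℝ, and κ a real-valued function on subsets of {1,…,C}, and let f(z) = Σ_{t∈T} a(t)·κ(O(z,t)) with O(z,t) = {c : z_c = t_c}. Suppose C = 2. Then there exist functions g₁ : Z_1 → ℝ and g₂ : Z_2 → ℝ such that for every z = (z_1,z_2) ∈ Z with the property that no t ∈ T satisfies (t_1,t_2) = (z_1,z_2), one has f(z) = g₁(z_1) + g₂(z_2). -/
import Mathlib


open Finset

/-- Corollary of Theorem 1 for two components: on inputs whose full conjunction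
is unseen during training, the kernel model is component-wise additive. -/
theorem two_components_additive_on_unseen
    (Z : Fin 2 → Type*)
    [∀ c, Fintype (Z c)] [∀ c, Nonempty (Z c)] [∀ c, DecidableEq (Z c)]
    (T : Finset (∀ c, Z c)) (a : (∀ c, Z c) → ℝ) (κ : Finset (Fin 2) → ℝ)
    (f : (∀ c, Z c) → ℝ)
    (hf : ∀ z, f z = ∑ t ∈ T, a t * κ (univ.filter fun c => z c = t c)) :
    ∃ (g₁ : Z 0 → ℝ) (g₂ : Z 1 → ℝ),
      ∀ z : (∀ c, Z c),
        (¬ ∃ t ∈ T, t 0 = z 0 ∧ t 1 = z 1) →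
        f z = g₁ (z 0) + g₂ (z 1) := by
  refine ⟨fun x => ∑ t ∈ T, a t * (if t 0 = x then κ {0} else κ ∅),
          fun y => ∑ t ∈ T, a t * (if t 1 = y then κ {1} - κ ∅ else 0), ?_⟩
  intro z hz
  rw [hf, ← Finset.sum_add_distrib]
  refine Finset.sum_congr rfl fun t ht => ?_
  have h : ¬(t 0 = z 0 ∧ t 1 = z 1) := fun h => hz ⟨t, ht, h⟩
  by_cases h0 : z 0 = t 0 <;> by_cases h1 : z 1 = t 1
  · exact absurd ⟨h0.symm, h1.symm⟩ h
  · have hs : (univ.filter fun c => z c = t c) = {0} := by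
      ext c; fin_cases c <;> simp [h0, h1]
    rw [hs, if_pos h0.symm, if_neg (fun h' => h1 h'.symm)]
    ring
  · have hs : (univ.filter fun c => z c = t c) = {1} := by
      ext c; fin_cases c <;> simp [h0, h1]
    rw [hs, if_neg (fun h' => h0 h'.symm), if_pos h1.symm]
    ring
  · have hs : (univ.filter fun c => z c = t c) = ∅ := by
      ext c; fin_cases c <;> simp [h0, h1]
    rw [hs, if_neg (fun h' => h0 h'.symm), if_neg (fun h' => h1 h'.symm)]
    ring
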